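/- For each integer k ≥ 4, the function Φ_k(η) = (1-|a(η)|⁴)sin((k-1)η) - |a(η)|³sin((k-2)η) + |a(η)|^k sin η, where |a(η)| = 1/(2cos η), has exactly one zero in the open interval (π/k, π/(k-1)). -/

import Mathlib

open Real Set

set_option maxHeartbeats 1000000 in
theorem key4 : ∃! η : ℝ, η ∈ Set.Ioo (π/4) (π/3) ∧
    (1 - (1/(2*Real.cos η))^4) * Real.sin (3*η) - (1/(2*Real.cos η))^3 * Real.sin (2*η)
      + (1/(2*Real.cos η))^4 * Real.sin η = 0 := by
  have hident : ∀ η : ℝ, Real.cos η ≠ 0 →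
      (1 - (1/(2*Real.cos η))^4) * Real.sin (3*η) - (1/(2*Real.cos η))^3 * Real.sin (2*η)
        + (1/(2*Real.cos η))^4 * Real.sin η
      = Real.sin η * (4*Real.cos η^2 - 1) * (8*Real.cos η^4 - 1) / (8*Real.cos η^4) := by
    intro η hc
    have hs3 : Real.sin η ^ 3 = Real.sin η * (1 - Real.cos η ^ 2) := by
      rw [pow_succ, Real.sin_sq]; ring
    rw [Real.sin_three_mul, Real.sin_two_mul, hs3]
    field_simp
    ring
  have hsqrt2 : Real.sqrt 2 ≤ 3/2 := by
    nlinarith [Real.sq_sqrt (by norm_num : (0:ℝ) ≤ 2), Real.sqrt_nonneg 2]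
  set c₀ : ℝ := Real.sqrt (Real.sqrt (1/8)) with hc₀
  have h8 : (0:ℝ) ≤ 1/8 := by norm_num
  have hc₀sq : c₀^2 = Real.sqrt (1/8) := Real.sq_sqrt (Real.sqrt_nonneg _)
  have hc₀4 : c₀^4 = 1/8 := by
    have : c₀^4 = (c₀^2)^2 := by ring
    rw [this, hc₀sq, Real.sq_sqrt h8]
  have hc₀pos : 0 < c₀ := by
    apply Real.sqrt_pos.2; apply Real.sqrt_pos.2; norm_num
  have hc₀lt : c₀ < Real.sqrt 2 / 2 := by
    nlinarith [hc₀4, Real.sq_sqrt (by norm_num : (0:ℝ) ≤ 2), Real.sqrt_nonneg 2,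
      sq_nonneg (c₀ - Real.sqrt 2 / 2), sq_nonneg (c₀^2 - 1/2), sq_nonneg (c₀ + Real.sqrt 2/2)]
  have hc₀gt : 1/2 < c₀ := by
    nlinarith [hc₀4, hc₀pos, sq_nonneg (c₀ - 1/2), sq_nonneg (c₀ + 1/2), sq_nonneg (c₀^2 - 1/4)]
  have hc₀le1 : c₀ ≤ 1 := by linarith
  set η₀ : ℝ := Real.arccos c₀ with hη₀
  have hcosη₀ : Real.cos η₀ = c₀ := Real.cos_arccos (by linarith) hc₀le1
  have hη₀mem : η₀ ∈ Set.Icc 0 π := ⟨Real.arccos_nonneg _, Real.arccos_le_pi _⟩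
  have hπ4mem : π/4 ∈ Set.Icc (0:ℝ) π := by
    constructor <;> nlinarith [Real.pi_pos]
  have hπ3mem : π/3 ∈ Set.Icc (0:ℝ) π := by
    constructor <;> nlinarith [Real.pi_pos]
  have h1 : π/4 < η₀ := by
    have := Real.strictAntiOn_cos.lt_iff_gt hη₀mem hπ4mem
    rw [Real.cos_pi_div_four, hcosη₀] at this
    exact this.1 hc₀lt
  have h2 : η₀ < π/3 := by
    have := Real.strictAntiOn_cos.lt_iff_gt hπ3mem hη₀mem
    rw [Real.cos_pi_div_three, hcosη₀] at this
    exact this.1 hc₀gt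
  refine ⟨η₀, ⟨⟨h1, h2⟩, ?_⟩, ?_⟩
  · rw [hident η₀ (by rw [hcosη₀]; positivity), hcosη₀, hc₀4]
    norm_num
  · rintro η ⟨⟨ha, hb⟩, hz⟩
    have hηmem : η ∈ Set.Icc 0 π := by
      constructor <;> nlinarith [Real.pi_pos]
    have hcgt : 1/2 < Real.cos η := by
      have := Real.strictAntiOn_cos.lt_iff_gt hπ3mem hηmem
      rw [Real.cos_pi_div_three] at this
      exact this.2 hb
    have hspos : 0 < Real.sin η := Real.sin_pos_of_pos_of_lt_pi (by nlinarith [Real.pi_pos]) (by nlinarith [Real.pi_pos])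
    rw [hident η (by positivity)] at hz
    have hd : (8:ℝ) * Real.cos η ^ 4 ≠ 0 := by positivity
    have hc4 : Real.cos η ^ 4 = 1/8 := by
      rcases div_eq_zero_iff.1 hz with hnum | hden
      · rcases mul_eq_zero.1 hnum with h | h
        · rcases mul_eq_zero.1 h with h' | h'
          · exact absurd h' (ne_of_gt hspos)
          · nlinarith
        · linarith
      · exact absurd hden hd
    have hceq : Real.cos η = c₀ := by
      by_contra hne
      rcases lt_or_gt_of_ne hne with h | h
      · have := pow_lt_pow_left₀ h (by linarith : (0:ℝ) ≤ Real.cos η) (by norm_num : 4 ≠ 0)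
        rw [hc4, hc₀4] at this; norm_num at this
      · have := pow_lt_pow_left₀ h (by linarith : (0:ℝ) ≤ c₀) (by norm_num : 4 ≠ 0)
        rw [hc4, hc₀4] at this; norm_num at this
    exact Real.injOn_cos hηmem hη₀mem (by rw [hceq, hcosη₀])


set_option maxHeartbeats 1000000 in
theorem key5 : ∃! η : ℝ, η ∈ Set.Ioo (π/5) (π/4) ∧
    (1 - (1/(2*Real.cos η))^4) * Real.sin (4*η) - (1/(2*Real.cos η))^3 * Real.sin (3*η)
      + (1/(2*Real.cos η))^5 * Real.sin η = 0 := by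
  have hident : ∀ η : ℝ, Real.cos η ≠ 0 →
      (1 - (1/(2*Real.cos η))^4) * Real.sin (4*η) - (1/(2*Real.cos η))^3 * Real.sin (3*η)
        + (1/(2*Real.cos η))^5 * Real.sin η
      = Real.sin η * (256*(Real.cos η^2)^4 - 128*(Real.cos η^2)^3 - 32*(Real.cos η^2)^2
          + 12*(Real.cos η^2) + 1) / (32*Real.cos η^5) := by
    intro η hc
    have hs3 : Real.sin η ^ 3 = Real.sin η * (1 - Real.cos η ^ 2) := by
      rw [pow_succ, Real.sin_sq]; ring
    have h4 : (4:ℝ)*η = 2*(2*η) := by ring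
    rw [h4, Real.sin_two_mul, Real.cos_two_mul, Real.sin_two_mul, Real.sin_three_mul, hs3]
    field_simp
    ring
  have hπ := Real.pi_pos
  have h5 : Real.sqrt 5 ^ 2 = 5 := Real.sq_sqrt (by norm_num)
  have h5lb : (2.236:ℝ) < Real.sqrt 5 := by nlinarith [Real.sqrt_nonneg 5]
  have h5ub : Real.sqrt 5 < 2.2361 := by nlinarith [Real.sqrt_nonneg 5]
  have h2 : Real.sqrt 2 ^ 2 = 2 := Real.sq_sqrt (by norm_num)
  have h2lb : (1.414:ℝ) < Real.sqrt 2 := by nlinarith [Real.sqrt_nonneg 2]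
  have h2ub : Real.sqrt 2 < 1.4143 := by nlinarith [Real.sqrt_nonneg 2]
  -- cosine bounds (strict, on the open interval)
  have hcos_bounds : ∀ η ∈ Set.Ioo (π/5) (π/4),
      Real.sqrt 2/2 < Real.cos η ∧ Real.cos η < (1+Real.sqrt 5)/4 := by
    intro η ⟨hl, hr⟩
    constructor
    · rw [← Real.cos_pi_div_four]
      exact Real.cos_lt_cos_of_nonneg_of_le_pi (by linarith) (by linarith) hr
    · rw [← Real.cos_pi_div_five]
      exact Real.cos_lt_cos_of_nonneg_of_le_pi (by linarith) (by linarith) hl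
  have hcos_bounds' : ∀ η ∈ Set.Icc (π/5) (π/4), (0.7:ℝ) < Real.cos η := by
    intro η ⟨hl, hr⟩
    have : Real.cos (π/4) ≤ Real.cos η := by
      rcases eq_or_lt_of_le hr with h | h
      · rw [h]
      · exact le_of_lt (Real.cos_lt_cos_of_nonneg_of_le_pi (by linarith) (by linarith) h)
    rw [Real.cos_pi_div_four] at this
    linarith
  set f : ℝ → ℝ := fun η => (1 - (1/(2*Real.cos η))^4) * Real.sin (4*η)
      - (1/(2*Real.cos η))^3 * Real.sin (3*η) + (1/(2*Real.cos η))^5 * Real.sin η with hf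
  -- continuity
  have hcne : ∀ η ∈ Set.Icc (π/5) (π/4), 2*Real.cos η ≠ 0 := by
    intro η hη
    have := hcos_bounds' η hη
    intro hcon; linarith
  have hg : ContinuousOn (fun η => 1/(2*Real.cos η)) (Set.Icc (π/5) (π/4)) :=
    ContinuousOn.div continuousOn_const
      (continuous_const.mul Real.continuous_cos).continuousOn hcne
  have hcont : ContinuousOn f (Set.Icc (π/5) (π/4)) := by
    apply ContinuousOn.add
    apply ContinuousOn.sub
    · exact (continuousOn_const.sub (hg.pow 4)).mul
        (Real.continuous_sin.comp (continuous_const.mul continuous_id)).continuousOn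
    · exact (hg.pow 3).mul
        (Real.continuous_sin.comp (continuous_const.mul continuous_id)).continuousOn
    · exact (hg.pow 5).mul Real.continuous_sin.continuousOn
  -- endpoint signs
  have hfb : f (π/4) < 0 := by
    have hc : Real.cos (π/4) = Real.sqrt 2/2 := Real.cos_pi_div_four
    have hcpos : (0:ℝ) < Real.sqrt 2/2 := by linarith
    have hspos : (0:ℝ) < Real.sin (π/4) := by
      rw [Real.sin_pi_div_four]; linarith
    rw [hf]
    simp only
    rw [hident _ (by rw [hc]; positivity), hc]
    apply div_neg_of_neg_of_pos
    · have hy : ((Real.sqrt 2/2):ℝ)^2 = 1/2 := by nlinarith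
      rw [hy]
      have hq : (256*((1:ℝ)/2)^4 - 128*(1/2)^3 - 32*(1/2)^2 + 12*(1/2) + 1) = -1 := by norm_num
      rw [hq]
      nlinarith [hspos]
    · positivity
  have hfa : 0 < f (π/5) := by
    have hc : Real.cos (π/5) = (1+Real.sqrt 5)/4 := Real.cos_pi_div_five
    have hcpos : (0:ℝ) < (1+Real.sqrt 5)/4 := by linarith
    have hspos : (0:ℝ) < Real.sin (π/5) :=
      Real.sin_pos_of_pos_of_lt_pi (by linarith) (by nlinarith)
    rw [hf]
    simp only
    rw [hident _ (by rw [hc]; positivity), hc]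
    apply div_pos
    · have hy : (((1+Real.sqrt 5)/4):ℝ)^2 = (3+Real.sqrt 5)/8 := by nlinarith
      rw [hy]
      have hq : 256*(((3+Real.sqrt 5)/8):ℝ)^4 - 128*((3+Real.sqrt 5)/8)^3
          - 32*((3+Real.sqrt 5)/8)^2 + 12*((3+Real.sqrt 5)/8) + 1 = 4 + Real.sqrt 5 := by
        linear_combination (15/16 + Real.sqrt 5/2 + Real.sqrt 5^2/16) * h5
      rw [hq]
      nlinarith [hspos]
    · positivity
  -- uniqueness of zeros
  have huniq : ∀ η₁ ∈ Set.Ioo (π/5) (π/4), ∀ η₂ ∈ Set.Ioo (π/5) (π/4),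
      f η₁ = 0 → f η₂ = 0 → η₁ = η₂ := by
    have key : ∀ η ∈ Set.Ioo (π/5) (π/4), f η = 0 →
        (1/2 < Real.cos η^2 ∧ Real.cos η^2 < 0.655 ∧
          256*(Real.cos η^2)^4 - 128*(Real.cos η^2)^3 - 32*(Real.cos η^2)^2
            + 12*(Real.cos η^2) + 1 = 0) := by
      intro η hη hz
      obtain ⟨hcl, hcr⟩ := hcos_bounds η hη
      have hcpos : 0 < Real.cos η := by linarith
      have hy1 : 1/2 < Real.cos η^2 := by nlinarith
      have hy2 : Real.cos η^2 < 0.655 := by nlinarith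
      have hspos : 0 < Real.sin η :=
        Real.sin_pos_of_pos_of_lt_pi (by linarith [hη.1]) (by nlinarith [hη.2])
      rw [hf] at hz
      simp only at hz
      rw [hident _ (ne_of_gt hcpos)] at hz
      have hd : (32:ℝ)*Real.cos η^5 ≠ 0 := by positivity
      rcases div_eq_zero_iff.1 hz with hnum | hden
      · rcases mul_eq_zero.1 hnum with h | h
        · exact absurd h (ne_of_gt hspos)
        · exact ⟨hy1, hy2, h⟩
      · exact absurd hden hd
    intro η₁ hη₁ η₂ hη₂ hz₁ hz₂
    obtain ⟨ha1, hb1, hq1⟩ := key η₁ hη₁ hz₁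
    obtain ⟨ha2, hb2, hq2⟩ := key η₂ hη₂ hz₂
    set y₁ := Real.cos η₁^2 with hy₁def
    set y₂ := Real.cos η₂^2 with hy₂def
    have hR : 0 < 256*(y₂^3 + y₂^2*y₁ + y₂*y₁^2 + y₁^3) - 128*(y₂^2 + y₂*y₁ + y₁^2)
        - 32*(y₂ + y₁) + 12 := by
      nlinarith [mul_pos (sub_pos.2 ha1) (sub_pos.2 ha2), sq_nonneg (y₁ - y₂),
        mul_pos (mul_pos (sub_pos.2 ha1) (sub_pos.2 ha2)) (sub_pos.2 ha1),
        mul_pos (mul_pos (sub_pos.2 ha1) (sub_pos.2 ha2)) (sub_pos.2 ha2),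
        sub_pos.2 ha1, sub_pos.2 ha2, sub_pos.2 hb1, sub_pos.2 hb2,
        mul_pos (sub_pos.2 hb1) (sub_pos.2 hb2)]
    have hfac : (y₂ - y₁) * (256*(y₂^3 + y₂^2*y₁ + y₂*y₁^2 + y₁^3)
        - 128*(y₂^2 + y₂*y₁ + y₁^2) - 32*(y₂ + y₁) + 12) = 0 := by
      linear_combination hq2 - hq1
    have hyeq : y₁ = y₂ := by
      rcases mul_eq_zero.1 hfac with h | h
      · linarith
      · exact absurd h (ne_of_gt hR)
    have hc1pos : 0 < Real.cos η₁ := by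
      have := (hcos_bounds η₁ hη₁).1; linarith
    have hc2pos : 0 < Real.cos η₂ := by
      have := (hcos_bounds η₂ hη₂).1; linarith
    have hfac2 : (Real.cos η₁ - Real.cos η₂) * (Real.cos η₁ + Real.cos η₂) = 0 := by
      linear_combination hyeq
    have hceq : Real.cos η₁ = Real.cos η₂ := by
      rcases mul_eq_zero.1 hfac2 with h | h
      · linarith
      · linarith
    have hm1 : η₁ ∈ Set.Icc 0 π := ⟨by linarith [hη₁.1], by linarith [hη₁.2]⟩
    have hm2 : η₂ ∈ Set.Icc 0 π := ⟨by linarith [hη₂.1], by linarith [hη₂.2]⟩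
    exact Real.injOn_cos hm1 hm2 hceq
  -- existence by IVT
  have hsub : Set.Ioo (f (π/4)) (f (π/5)) ⊆ f '' Set.Ioo (π/5) (π/4) :=
    intermediate_value_Ioo' (by linarith) hcont
  obtain ⟨η₀, hη₀mem, hη₀z⟩ := hsub ⟨hfb, hfa⟩
  exact ⟨η₀, ⟨hη₀mem, hη₀z⟩, fun η hη => huniq η hη.1 η₀ hη₀mem hη.2 hη₀z⟩


set_option maxHeartbeats 1000000 in
lemma derivNeg (K A c s S1 C1 S2 p q : ℝ)
    (hK : 6 ≤ K) (hApos : 0 < A) (hAub : A ≤ 0.625)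
    (hcx : 0.8 ≤ c) (hcx1 : c ≤ 1)
    (hs0 : 0 < s) (hs6 : s ≤ 0.6) (hKs : K*s ≤ 3.78)
    (hS1l : 0 ≤ S1) (hC1ub : C1 ≤ -0.86) (hS2b : -1 ≤ S2)
    (hp : 0 < p) (hp6 : p ≤ 0.0597) (hq : 0 < q) (hq7 : q ≤ 0.0374) :
    ((1-A^4)*(K-1) - (K-2)*A^2/2)*C1 - 8*s*A^5*S1 - (K-2)*A^3*s*S1
      - 6*s*A^4*S2 + 2*K*s^2*q + p*c < 0 := by
  have hA2ub : A^2 ≤ 0.391 := by nlinarith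
  have hA4ub : A^4 ≤ 0.153 := by nlinarith [sq_nonneg A, sq_nonneg (A^2)]
  have hW : 0.847*(K-1) - 0.1955*(K-2) ≤ (1-A^4)*(K-1) - (K-2)*A^2/2 := by
    nlinarith [hA4ub, hA2ub]
  have hWpos : (0:ℝ) < 0.847*(K-1) - 0.1955*(K-2) := by linarith
  have hWpos' : 0 < (1-A^4)*(K-1) - (K-2)*A^2/2 := lt_of_lt_of_le hWpos hW
  have hT2 : ((1-A^4)*(K-1) - (K-2)*A^2/2)*C1 ≤ -0.86*(0.847*(K-1) - 0.1955*(K-2)) := by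
    have h1 := mul_le_mul_of_nonneg_left hC1ub (le_of_lt hWpos')
    nlinarith [h1, hW]
  have hT1 : -8*s*A^5*S1 ≤ 0 := by
    have := mul_nonneg (mul_nonneg (le_of_lt hs0) (le_of_lt (pow_pos hApos 5))) hS1l
    nlinarith
  have hT3 : -(K-2)*A^3*s*S1 ≤ 0 := by
    have := mul_nonneg (mul_nonneg (mul_nonneg (by linarith : (0:ℝ) ≤ K-2)
      (le_of_lt (pow_pos hApos 3))) (le_of_lt hs0)) hS1l
    nlinarith
  have hT4 : -6*s*A^4*S2 ≤ 0.551 := by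
    nlinarith [mul_nonneg (mul_nonneg hs0.le (pow_nonneg hApos.le 4))
        (by linarith : (0:ℝ) ≤ 1 + S2),
      mul_le_mul hs6 hA4ub (pow_nonneg hApos.le 4) (by norm_num)]
  have hT5 : 2*K*s^2*q ≤ 0.17 := by
    have hKs0 : (0:ℝ) ≤ K*s := by positivity
    have p1 : K*s*s ≤ 2.268 := by nlinarith [hKs, hs6, hs0]
    have p2 : K*s*s*q ≤ 2.268*0.0374 := mul_le_mul p1 hq7 hq.le (by norm_num)
    nlinarith [p2]
  have hT6 : p*c ≤ 0.0597 := by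
    nlinarith [mul_nonneg hp.le (by linarith : (0:ℝ) ≤ 1 - c)]
  linarith [hT1, hT2, hT3, hT4, hT5, hT6, hK]

set_option maxHeartbeats 2000000 in
theorem key6 (k : ℕ) (hk : 6 ≤ k) : ∃! η : ℝ, η ∈ Set.Ioo (π/(k:ℝ)) (π/((k:ℝ)-1)) ∧
    (1 - (1/(2*Real.cos η))^4) * Real.sin (((k:ℝ)-1)*η)
      - (1/(2*Real.cos η))^3 * Real.sin (((k:ℝ)-2)*η)
      + (1/(2*Real.cos η))^k * Real.sin η = 0 := by
  have hπ := Real.pi_pos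
  have hπ315 : π < 3.15 := by
    have := Real.pi_lt_d2; linarith
  have h5 : Real.sqrt 5 ^ 2 = 5 := Real.sq_sqrt (by norm_num)
  have h5lb : (2.2:ℝ) < Real.sqrt 5 := by nlinarith [Real.sqrt_nonneg 5]
  have h3 : Real.sqrt 3 ^ 2 = 3 := Real.sq_sqrt (by norm_num)
  have h3lb : (1.73:ℝ) < Real.sqrt 3 := by nlinarith [Real.sqrt_nonneg 3]
  set K : ℝ := (k:ℝ) with hKdef
  have hK : (6:ℝ) ≤ K := by rw [hKdef]; exact_mod_cast hk
  have ha_pos : 0 < π/K := by positivity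
  have hab : π/K < π/(K-1) := div_lt_div_of_pos_left hπ (by linarith) (by linarith)
  have hb5 : π/(K-1) ≤ π/5 :=
    div_le_div_of_nonneg_left (le_of_lt hπ) (by norm_num) (by linarith)
  set f : ℝ → ℝ := fun η => (1 - (1/(2*Real.cos η))^4) * Real.sin ((K-1)*η)
      - (1/(2*Real.cos η))^3 * Real.sin ((K-2)*η)
      + (1/(2*Real.cos η))^k * Real.sin η with hf
  have hcb : ∀ η ∈ Set.Icc (π/K) (π/(K-1)), (0.8:ℝ) ≤ Real.cos η := by
    intro η ⟨hl, hr⟩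
    have h1 : Real.cos (π/5) ≤ Real.cos η := by
      rcases eq_or_lt_of_le (hr.trans hb5) with h | h
      · rw [h]
      · exact le_of_lt (Real.cos_lt_cos_of_nonneg_of_le_pi (by linarith) (by linarith) h)
    rw [Real.cos_pi_div_five] at h1
    linarith
  have hcne : ∀ η ∈ Set.Icc (π/K) (π/(K-1)), 2*Real.cos η ≠ 0 := by
    intro η hη
    have := hcb η hη
    intro hcon; linarith
  have hg : ContinuousOn (fun η => 1/(2*Real.cos η)) (Set.Icc (π/K) (π/(K-1))) :=
    ContinuousOn.div continuousOn_const
      (continuous_const.mul Real.continuous_cos).continuousOn hcne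
  have hcont : ContinuousOn f (Set.Icc (π/K) (π/(K-1))) := by
    apply ContinuousOn.add
    apply ContinuousOn.sub
    · exact (continuousOn_const.sub (hg.pow 4)).mul
        (Real.continuous_sin.comp (continuous_const.mul continuous_id)).continuousOn
    · exact (hg.pow 3).mul
        (Real.continuous_sin.comp (continuous_const.mul continuous_id)).continuousOn
    · exact (hg.pow k).mul Real.continuous_sin.continuousOn
  have hfa : 0 < f (π/K) := by
    have e1 : (K-1)*(π/K) = π - π/K := by field_simp
    have e2 : (K-2)*(π/K) = π - 2*(π/K) := by field_simp
    have hcpos : (0.86:ℝ) ≤ Real.cos (π/K) := by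
      have h1 : Real.cos (π/6) ≤ Real.cos (π/K) := by
        rcases eq_or_lt_of_le (show π/K ≤ π/6 from
          div_le_div_of_nonneg_left (le_of_lt hπ) (by norm_num) (by linarith)) with h | h
        · rw [h]
        · exact le_of_lt (Real.cos_lt_cos_of_nonneg_of_le_pi (by positivity) (by linarith) h)
      rw [Real.cos_pi_div_six] at h1
      linarith
    have hspos : 0 < Real.sin (π/K) := Real.sin_pos_of_pos_of_lt_pi ha_pos (by nlinarith)
    rw [hf]
    simp only
    rw [e1, e2, Real.sin_pi_sub, Real.sin_pi_sub, Real.sin_two_mul]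
    set A : ℝ := 1/(2*Real.cos (π/K)) with hAdef
    have hApos : 0 < A := by rw [hAdef]; positivity
    have hA2c : 2*A*Real.cos (π/K) = 1 := by rw [hAdef]; field_simp
    have hAub : A ≤ 0.582 := by
      rw [hAdef, div_le_iff₀ (by linarith)]
      linarith
    have hAkpos : 0 < A^k := pow_pos hApos k
    have heq : (1 - A^4) * Real.sin (π/K) - A^3 * (2*Real.sin (π/K)*Real.cos (π/K))
        + A^k * Real.sin (π/K) = Real.sin (π/K) * (1 - A^4 - A^2 + A^k) := by
      linear_combination (-(Real.sin (π/K)) * A^2) * hA2c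
    rw [heq]
    have hA4 : A^4 ≤ 0.115 := by
      have := pow_le_pow_left₀ hApos.le hAub 4
      nlinarith
    have hA2' : A^2 ≤ 0.339 := by
      have := pow_le_pow_left₀ hApos.le hAub 2
      nlinarith
    have hfac : 0 < 1 - A^4 - A^2 + A^k := by linarith
    exact mul_pos hspos hfac
  have hfb : f (π/(K-1)) < 0 := by
    have hK1 : K - 1 ≠ 0 := by linarith
    have e1 : (K-1)*(π/(K-1)) = π := by field_simp
    have e2 : (K-2)*(π/(K-1)) = π - π/(K-1) := by field_simp; ring
    have hbmem : π/(K-1) ∈ Set.Icc (π/K) (π/(K-1)) := ⟨le_of_lt hab, le_refl _⟩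
    have hcpos : (0.8:ℝ) ≤ Real.cos (π/(K-1)) := hcb _ hbmem
    have hspos : 0 < Real.sin (π/(K-1)) :=
      Real.sin_pos_of_pos_of_lt_pi (div_pos hπ (by linarith)) (by nlinarith)
    rw [hf]
    simp only
    rw [e1, e2, Real.sin_pi, Real.sin_pi_sub]
    set A : ℝ := 1/(2*Real.cos (π/(K-1))) with hAdef
    have hApos : 0 < A := by rw [hAdef]; positivity
    have hAub : A < 1 := by
      rw [hAdef, div_lt_iff₀ (by linarith)]
      linarith
    have hklt : A^k < A^3 := pow_lt_pow_right_of_lt_one₀ hApos hAub (by omega)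
    nlinarith [hspos, hklt]
  have hderiv : ∀ x ∈ Set.Ioo (π/K) (π/(K-1)), deriv f x < 0 := by
    intro x ⟨hxl, hxr⟩
    have hxpos : 0 < x := lt_trans ha_pos hxl
    have hx5 : x ≤ π/5 := le_of_lt (lt_of_lt_of_le hxr hb5)
    have hcx : (0.8:ℝ) ≤ Real.cos x := hcb x ⟨le_of_lt hxl, le_of_lt hxr⟩
    have hcx1 : Real.cos x ≤ 1 := Real.cos_le_one x
    have h2cne : 2*Real.cos x ≠ 0 := by intro h; nlinarith
    have hA : HasDerivAt (fun y => 1/(2*Real.cos y)) (-(2*(-Real.sin x))/(2*Real.cos x)^2) x := by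
      have h2c : HasDerivAt (fun y => 2*Real.cos y) (2*(-Real.sin x)) x :=
        (Real.hasDerivAt_cos x).const_mul 2
      have h := h2c.inv h2cne; simp only [one_div]; exact h
    have hs1 : HasDerivAt (fun y => Real.sin ((K-1)*y)) (Real.cos ((K-1)*x) * (K-1)) x := by
      have := (Real.hasDerivAt_sin ((K-1)*x)).comp x ((hasDerivAt_id x).const_mul (K-1))
      simp only [mul_one] at this; exact this
    have hs2 : HasDerivAt (fun y => Real.sin ((K-2)*y)) (Real.cos ((K-2)*x) * (K-2)) x := by
      have := (Real.hasDerivAt_sin ((K-2)*x)).comp x ((hasDerivAt_id x).const_mul (K-2))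
      simp only [mul_one] at this; exact this
    have hF : HasDerivAt f
        ((0 - (4*(1/(2*Real.cos x))^3 * (-(2*(-Real.sin x))/(2*Real.cos x)^2))) * Real.sin ((K-1)*x)
          + (1 - (1/(2*Real.cos x))^4) * (Real.cos ((K-1)*x) * (K-1))
          - ((3*(1/(2*Real.cos x))^2 * (-(2*(-Real.sin x))/(2*Real.cos x)^2)) * Real.sin ((K-2)*x)
            + (1/(2*Real.cos x))^3 * (Real.cos ((K-2)*x) * (K-2)))
          + ((K*(1/(2*Real.cos x))^(k-1) * (-(2*(-Real.sin x))/(2*Real.cos x)^2)) * Real.sin x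
            + (1/(2*Real.cos x))^k * Real.cos x)) x := by
      rw [hf]
      exact ((((hasDerivAt_const x (1:ℝ)).sub (hA.pow 4)).mul hs1).sub
        ((hA.pow 3).mul hs2)).add ((hA.pow k).mul (Real.hasDerivAt_sin x))
    rw [hF.deriv]
    clear hF hA hs1 hs2 hcont hg hcne hcb hfa hfb hf
    set c := Real.cos x with hcdef
    set s := Real.sin x with hsdef
    set S1 := Real.sin ((K-1)*x) with hS1def
    set C1 := Real.cos ((K-1)*x) with hC1def
    set S2 := Real.sin ((K-2)*x) with hS2def
    set A : ℝ := 1/(2*c) with hAdef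
    have hApos : 0 < A := by rw [hAdef]; positivity
    have hA2c : 2*A*c = 1 := by rw [hAdef]; field_simp
    have hAub : A ≤ 0.625 := by
      rw [hAdef, div_le_iff₀ (by linarith)]; linarith
    have hAle1 : A ≤ 1 := by linarith
    have hs0 : 0 < s := Real.sin_pos_of_pos_of_lt_pi hxpos (by nlinarith)
    have hsx : s < x := Real.sin_lt hxpos
    have hs6 : s ≤ 0.6 := by nlinarith [Real.sin_sq_add_cos_sq x]
    have hKs : K*s ≤ 3.78 := by
      have h1 : s < π/(K-1) := lt_trans hsx hxr
      have h2 : K*s < K*(π/(K-1)) := mul_lt_mul_of_pos_left h1 (by linarith : (0:ℝ) < K)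
      have h3 : K*(π/(K-1)) ≤ 1.2*π := by
        rw [mul_div_assoc']
        rw [div_le_iff₀ (by linarith : (0:ℝ) < K-1)]
        have h4 : (0:ℝ) ≤ π*(0.2*K - 1.2) := mul_nonneg (le_of_lt hπ) (by linarith)
        linarith [h4]
      linarith
    have hθl : π - π/K < (K-1)*x := by
      have h1 : (K-1)*(π/K) = π - π/K := by field_simp
      nlinarith
    have hθr : (K-1)*x < π := by
      have hK1' : K - 1 ≠ 0 := by linarith
      have h1 : (K-1)*(π/(K-1)) = π := by field_simp
      nlinarith
    have hπK6 : π/K ≤ π/6 :=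
      div_le_div_of_nonneg_left (le_of_lt hπ) (by norm_num) (by linarith)
    have hC1ub : C1 ≤ -0.86 := by
      have h1 : Real.cos ((K-1)*x) < Real.cos (π - π/K) :=
        Real.cos_lt_cos_of_nonneg_of_le_pi (by linarith) (le_of_lt hθr) hθl
      rw [Real.cos_pi_sub] at h1
      have h2 : Real.cos (π/6) ≤ Real.cos (π/K) := by
        rcases eq_or_lt_of_le hπK6 with h | h
        · rw [h]
        · exact le_of_lt (Real.cos_lt_cos_of_nonneg_of_le_pi (by positivity) (by linarith) h)
      rw [Real.cos_pi_div_six] at h2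
      rw [hC1def]
      linarith
    have hS1l : 0 ≤ S1 := Real.sin_nonneg_of_nonneg_of_le_pi (by nlinarith) (le_of_lt hθr)
    have hS2b : -1 ≤ S2 := Real.neg_one_le_sin _
    have hC2 : Real.cos ((K-2)*x) = C1*c + S1*s := by
      have h1 : (K-2)*x = (K-1)*x - x := by ring
      rw [h1, Real.cos_sub, hC1def, hS1def, hcdef, hsdef]
    rw [hC2]
    have hA' : -(2*(-s))/(2*c)^2 = 2*s*A^2 := by
      rw [hAdef]; field_simp
    rw [hA']
    have hpow1 : A^(k-1) * A^2 = A^(k+1) := by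
      rw [← pow_add]; congr 1; omega
    have hAk6 : A^k ≤ A^6 := pow_le_pow_of_le_one (le_of_lt hApos) hAle1 hk
    have hAk1 : A^(k+1) ≤ A^7 := pow_le_pow_of_le_one (le_of_lt hApos) hAle1 (by omega)
    have hA6 : A^6 ≤ 0.0597 := by
      have := pow_le_pow_left₀ hApos.le hAub 6; nlinarith
    have hA7 : A^7 ≤ 0.0374 := by
      have := pow_le_pow_left₀ hApos.le hAub 7; nlinarith
    have hAkpos : 0 < A^k := pow_pos hApos k
    have hAk1pos : 0 < A^(k+1) := pow_pos hApos (k+1)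
    have hgroup : (0 - (4*A^3 * (2*s*A^2))) * S1
          + (1 - A^4) * (C1 * (K-1))
          - ((3*A^2 * (2*s*A^2)) * S2 + A^3 * ((C1*c + S1*s) * (K-2)))
          + ((K*A^(k-1) * (2*s*A^2)) * s + A^k * c)
        = ((1-A^4)*(K-1) - (K-2)*A^2/2)*C1 - 8*s*A^5*S1 - (K-2)*A^3*s*S1
          - 6*s*A^4*S2 + 2*K*s^2*A^(k+1) + A^k*c := by
      linear_combination (2*K*s^2) * hpow1 - ((K-2)*A^2*C1/2) * hA2c
    rw [hgroup]
    exact derivNeg K A c s S1 C1 S2 (A^k) (A^(k+1)) hK hApos hAub hcx hcx1 hs0 hs6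
      hKs hS1l hC1ub hS2b hAkpos (le_trans hAk6 hA6) hAk1pos (le_trans hAk1 hA7)
  have hanti : StrictAntiOn f (Set.Icc (π/K) (π/(K-1))) := by
    apply strictAntiOn_of_deriv_neg (convex_Icc _ _) hcont
    intro x hx
    rw [interior_Icc] at hx
    exact hderiv x hx
  have hsub : Set.Ioo (f (π/(K-1))) (f (π/K)) ⊆ f '' Set.Ioo (π/K) (π/(K-1)) :=
    intermediate_value_Ioo' (le_of_lt hab) hcont
  obtain ⟨η₀, hη₀mem, hη₀z⟩ := hsub ⟨hfb, hfa⟩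
  refine ⟨η₀, ⟨hη₀mem, hη₀z⟩, ?_⟩
  rintro η ⟨hηmem, hηz⟩
  have hηz' : f η = 0 := hηz
  exact hanti.injOn (Set.Ioo_subset_Icc_self hηmem) (Set.Ioo_subset_Icc_self hη₀mem)
    (hηz'.trans hη₀z.symm)


theorem stmt11 (k : ℕ) (hk : 4 ≤ k) (A : ℝ → ℝ)
    (hA : ∀ η, A η = 1 / (2 * Real.cos η))
    (Φ : ℝ → ℝ)
    (hΦ : ∀ η, Φ η = (1 - A η ^ 4) * Real.sin (((k : ℝ) - 1) * η)
      - A η ^ 3 * Real.sin (((k : ℝ) - 2) * η) + A η ^ k * Real.sin η) :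
    ∃! η : ℝ, η ∈ Set.Ioo (π / k) (π / ((k : ℝ) - 1)) ∧ Φ η = 0 := by
  have hΦf : Φ = fun η => (1 - (1/(2*Real.cos η))^4) * Real.sin (((k:ℝ)-1)*η)
      - (1/(2*Real.cos η))^3 * Real.sin (((k:ℝ)-2)*η) + (1/(2*Real.cos η))^k * Real.sin η := by
    funext η
    rw [hΦ η, hA η]
  obtain h4 | h5 | h6 : k = 4 ∨ k = 5 ∨ 6 ≤ k := by omega
  · subst h4
    simp only [hΦf]
    have e0 : ((4:ℕ):ℝ) = 4 := by norm_num
    simp only [e0, show ((4:ℝ)-1) = 3 from by norm_num, show ((4:ℝ)-2) = 2 from by norm_num]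
    exact key4
  · subst h5
    simp only [hΦf]
    have e0 : ((5:ℕ):ℝ) = 5 := by norm_num
    simp only [e0, show ((5:ℝ)-1) = 4 from by norm_num, show ((5:ℝ)-2) = 3 from by norm_num]
    exact key5
  · simp only [hΦf]
    exact key6 k h6
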